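/- There is a constant C₀ > 0 and, for each r ∈ (0,π/4), constants C₁ = C₁(r) > 0 and ε₀ = ε₀(r) > 0 such that the following holds. For every v = (1−s)(cos t·p + sin t·N) with p, N ∈ S³, ⟨p,N⟩ = 0, 0 < s ≤ ε₀ and |t| ≤ ε₀, one has B⁴_{R̄ − C₀√|(s,t)|}(Q̄) ∩ S³ ⊂ F_v(B⁴_{√2}(−N) ∩ S³) ⊂ B⁴_{R̄ + C₀√|(s,t)|}(Q̄) ∩ S³, and F_v(Δ(p,N,r) ∩ S³) ⊂ B⁴_{R̄ + C₁√|(s,t)|}(Q̄) \ B⁴_{R̄ − C₁√|(s,t)|}(Q̄), where Q̄ = −((t/s)/√(1+(t/s)²))·p − (1/√(1+(t/s)²))·N and R̄ = √(2(1 − (t/s)/√(1+(t/s)²))). -/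

import Mathlib

noncomputable section

open Metric
open scoped RealInnerProductSpace

/-- Euclidean four-space `ℝ⁴`. -/
abbrev E4 : Type := EuclideanSpace ℝ (Fin 4)

/-- The round unit three-sphere `S³ ⊆ ℝ⁴`. -/
def S3 : Set E4 := Metric.sphere 0 1

/-- The conformal transformation `F_v(x) = ((1-|v|²)/|x-v|²)(x-v) - v` of `S³`,
for `v` in the open unit ball `B⁴`. -/
def confMap (v x : E4) : E4 := ((1 - ‖v‖ ^ 2) / ‖x - v‖ ^ 2) • (x - v) - v

/-- For `p, N ∈ S³` with `⟪p,N⟫ = 0` and `r > 0`, the region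
`Δ(p,N,r) = S³ \ (B_r((cos r)p + (sin r)N) ∪ B_r((cos r)p - (sin r)N))`, the complement
in `S³` of the two geodesic balls of radius `r` centered at `(cos r)p ± (sin r)N`
(expressed via the identity `B_r(q) = B⁴_{√(2(1-cos r))}(q) ∩ S³`). -/
def capDelta (p N : E4) (r : ℝ) : Set E4 :=
  S3 \ (Metric.ball (Real.cos r • p + Real.sin r • N) (Real.sqrt (2 * (1 - Real.cos r))) ∪
        Metric.ball (Real.cos r • p - Real.sin r • N) (Real.sqrt (2 * (1 - Real.cos r))))

/-- The point `Q̄ = -((t/s)/√(1+(t/s)²))·p - (1/√(1+(t/s)²))·N`. -/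
def Qbar (p N : E4) (s t : ℝ) : E4 :=
  (-(t / s / Real.sqrt (1 + (t / s) ^ 2))) • p - (1 / Real.sqrt (1 + (t / s) ^ 2)) • N

/-- The radius `R̄ = √(2(1 - (t/s)/√(1+(t/s)²)))`. -/
def Rbar (s t : ℝ) : ℝ := Real.sqrt (2 * (1 - t / s / Real.sqrt (1 + (t / s) ^ 2)))


lemma eq_of_sq_eq_sq' {a b : ℝ} (ha : 0 ≤ a) (hb : 0 ≤ b) (h : a ^ 2 = b ^ 2) : a = b := by
  rw [← Real.sqrt_sq ha, h, Real.sqrt_sq hb]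

lemma confMap_inner (v x w : E4) :
    ⟪confMap v x, w⟫ = (1 - ‖v‖ ^ 2) / ‖x - v‖ ^ 2 * (⟪x, w⟫ - ⟪v, w⟫) - ⟪v, w⟫ := by
  rw [confMap, inner_sub_left, real_inner_smul_left, inner_sub_left]

lemma dist_sq_pos {v x : E4} (hx : ‖x‖ = 1) (hv : ‖v‖ < 1) : 0 < ‖x - v‖ ^ 2 := by
  have h1 : 1 - ‖v‖ ≤ ‖x - v‖ := by
    have := norm_sub_norm_le x v
    rw [hx] at this; linarith
  nlinarith [norm_nonneg (x - v)]

lemma confMap_norm {v x : E4} (hx : ‖x‖ = 1) (hv : ‖v‖ < 1) : ‖confMap v x‖ = 1 := by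
  have hd : 0 < ‖x - v‖ ^ 2 := dist_sq_pos hx hv
  have hne : ‖x - v‖ ≠ 0 := fun h0 => by rw [h0] at hd; norm_num at hd
  have hdx : ‖x - v‖ ^ 2 = 1 - 2 * ⟪x, v⟫ + ‖v‖ ^ 2 := by
    rw [norm_sub_sq_real, hx]; ring
  have key : ‖confMap v x‖ ^ 2 = 1 := by
    have e : ⟪x, v⟫ = (1 + ‖v‖ ^ 2 - ‖x - v‖ ^ 2) / 2 := by rw [hdx]; ring
    rw [confMap, norm_sub_sq_real, norm_smul, real_inner_smul_left, inner_sub_left,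
      real_inner_self_eq_norm_sq, mul_pow, Real.norm_eq_abs, sq_abs, e]
    field_simp
    ring
  exact eq_of_sq_eq_sq' (norm_nonneg _) (by norm_num) (by rw [key]; norm_num)

lemma confMap_inv {v x : E4} (hx : ‖x‖ = 1) (hv : ‖v‖ < 1) :
    confMap (-v) (confMap v x) = x := by
  have hd : 0 < ‖x - v‖ ^ 2 := dist_sq_pos hx hv
  have hne : ‖x - v‖ ≠ 0 := fun h0 => by rw [h0] at hd; norm_num at hd
  have hw : ‖v‖ ^ 2 < 1 := by nlinarith [norm_nonneg v]
  set lam : ℝ := (1 - ‖v‖ ^ 2) / ‖x - v‖ ^ 2 with hlam_def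
  have hw1 : 0 < 1 - ‖v‖ ^ 2 := by nlinarith
  have hlam : 0 < lam := div_pos hw1 hd
  have h1 : confMap v x - (-v) = lam • (x - v) := by
    rw [confMap]; abel
  have h2 : ‖confMap v x - (-v)‖ ^ 2 = lam ^ 2 * ‖x - v‖ ^ 2 := by
    rw [h1, norm_smul, Real.norm_eq_abs, mul_pow, sq_abs]
  rw [confMap, norm_neg, h2, h1, smul_smul, sub_neg_eq_add]
  have hld : lam * ‖x - v‖ ^ 2 = 1 - ‖v‖ ^ 2 := by
    rw [hlam_def]; field_simp
  have h4 : lam ^ 2 * ‖x - v‖ ^ 2 = lam * (1 - ‖v‖ ^ 2) := by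
    rw [pow_two, mul_assoc, hld]
  have h3 : (1 - ‖v‖ ^ 2) / (lam ^ 2 * ‖x - v‖ ^ 2) * lam = 1 := by
    rw [h4]
    field_simp
  rw [h3, one_smul, sub_add_cancel]

lemma abs_sin_sub_le {x : ℝ} (h : |x| ≤ 1) : |Real.sin x - x| ≤ |x| ^ 3 / 4 := by
  rcases lt_trichotomy x 0 with hx | hx | hx
  · have h1 : 0 < -x := by linarith
    have h2 : -x ≤ 1 := by rw [abs_of_neg hx] at h; linarith
    have h3 := Real.sin_lt h1
    have h4 := Real.sin_gt_sub_cube h1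
    rw [Real.sin_neg] at h3 h4
    rw [abs_of_neg hx, abs_le]
    constructor <;> nlinarith
  · simp [hx]
  · have h2 : x ≤ 1 := by rw [abs_of_pos hx] at h; linarith
    have h3 := Real.sin_lt hx
    have h4 := Real.sin_gt_sub_cube hx
    rw [abs_of_pos hx, abs_le]
    constructor <;> nlinarith

lemma abs_sincos_sub_le {t : ℝ} (h : |t| ≤ 1/2) : |Real.sin t * Real.cos t - t| ≤ |t| ^ 3 := by
  have h2 : |2 * t| ≤ 1 := by rw [abs_mul, abs_two]; linarith
  have e : Real.sin t * Real.cos t - t = (Real.sin (2 * t) - 2 * t) / 2 := by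
    rw [Real.sin_two_mul]; ring
  have h3 : |Real.sin (2 * t) - 2 * t| ≤ |2 * t| ^ 3 / 4 := abs_sin_sub_le h2
  rw [abs_mul, abs_two] at h3
  rw [e, abs_div, abs_two]
  nlinarith [abs_nonneg t]

lemma key_id (p N : E4) (hp1 : ‖p‖ = 1) (hN1 : ‖N‖ = 1) (hpN : ⟪p, N⟫ = 0)
    (s t : ℝ) (hs0 : 0 < s) (hs1 : s < 1) (x : E4) (hx : ‖x‖ = 1) :
    (2 * ((1 - s) * Real.cos t) * ((1 - s) * Real.sin t) *
        ⟪confMap ((1 - s) • (Real.cos t • p + Real.sin t • N)) x, p⟫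
      + (s * (2 - s) + 2 * ((1 - s) * Real.sin t) ^ 2) *
        ⟪confMap ((1 - s) • (Real.cos t • p + Real.sin t • N)) x, N⟫
      + 2 * ((1 - s) * Real.sin t)) * ‖x - (1 - s) • (Real.cos t • p + Real.sin t • N)‖ ^ 2
    = (s * (2 - s)) ^ 2 * ⟪x, N⟫ := by
  set v : E4 := (1 - s) • (Real.cos t • p + Real.sin t • N) with hv_def
  have hpp : ⟪p, p⟫ = 1 := by rw [real_inner_self_eq_norm_sq, hp1]; norm_num
  have hNN : ⟪N, N⟫ = 1 := by rw [real_inner_self_eq_norm_sq, hN1]; norm_num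
  have hNp : ⟪N, p⟫ = 0 := by rw [real_inner_comm]; exact hpN
  have hvp : ⟪v, p⟫ = (1 - s) * Real.cos t := by
    rw [hv_def, real_inner_smul_left, inner_add_left, real_inner_smul_left,
      real_inner_smul_left, hpp, hNp]; ring
  have hvN : ⟪v, N⟫ = (1 - s) * Real.sin t := by
    rw [hv_def, real_inner_smul_left, inner_add_left, real_inner_smul_left,
      real_inner_smul_left, hpN, hNN]; ring
  have hxv : ⟪x, v⟫ = (1 - s) * (Real.cos t * ⟪x, p⟫ + Real.sin t * ⟪x, N⟫) := by
    rw [hv_def, real_inner_smul_right, inner_add_right, real_inner_smul_right,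
      real_inner_smul_right]
  have hvsq : ‖v‖ ^ 2 = (1 - s) ^ 2 := by
    rw [← real_inner_self_eq_norm_sq]
    rw [hv_def, real_inner_smul_right, inner_add_right, real_inner_smul_right,
      real_inner_smul_right, ← hv_def, hvp, hvN]
    linear_combination (1 - s) ^ 2 * Real.sin_sq_add_cos_sq t
  have hvv : ‖v‖ = 1 - s := eq_of_sq_eq_sq' (norm_nonneg v) (by linarith) (by rw [hvsq])
  have hv1 : ‖v‖ < 1 := by rw [hvv]; linarith
  have hd : 0 < ‖x - v‖ ^ 2 := dist_sq_pos hx hv1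
  have hne : ‖x - v‖ ≠ 0 := fun h0 => by rw [h0] at hd; norm_num at hd
  have hdx : ‖x - v‖ ^ 2
      = 1 - 2 * (((1 - s) * Real.cos t) * ⟪x, p⟫ + ((1 - s) * Real.sin t) * ⟪x, N⟫)
        + (1 - s) ^ 2 := by
    rw [norm_sub_sq_real, hx, hxv, hvsq]; ring
  have hone : 1 - ‖v‖ ^ 2 = s * (2 - s) := by rw [hvsq]; ring
  have hip : ⟪confMap v x, p⟫ * ‖x - v‖ ^ 2
      = s * (2 - s) * (⟪x, p⟫ - (1 - s) * Real.cos t)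
        - (1 - s) * Real.cos t * ‖x - v‖ ^ 2 := by
    rw [confMap_inner, hone, hvp]
    field_simp
  have hiN : ⟪confMap v x, N⟫ * ‖x - v‖ ^ 2
      = s * (2 - s) * (⟪x, N⟫ - (1 - s) * Real.sin t)
        - (1 - s) * Real.sin t * ‖x - v‖ ^ 2 := by
    rw [confMap_inner, hone, hvN]
    field_simp
  have hab : ((1 - s) * Real.cos t) ^ 2 + ((1 - s) * Real.sin t) ^ 2 = (1 - s) ^ 2 := by
    linear_combination (1 - s) ^ 2 * Real.sin_sq_add_cos_sq t
  calc (2 * ((1 - s) * Real.cos t) * ((1 - s) * Real.sin t) * ⟪confMap v x, p⟫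
      + (s * (2 - s) + 2 * ((1 - s) * Real.sin t) ^ 2) * ⟪confMap v x, N⟫
      + 2 * ((1 - s) * Real.sin t)) * ‖x - v‖ ^ 2
      = 2 * ((1 - s) * Real.cos t) * ((1 - s) * Real.sin t) * (⟪confMap v x, p⟫ * ‖x - v‖ ^ 2)
      + (s * (2 - s) + 2 * ((1 - s) * Real.sin t) ^ 2) * (⟪confMap v x, N⟫ * ‖x - v‖ ^ 2)
      + 2 * ((1 - s) * Real.sin t) * ‖x - v‖ ^ 2 := by ring
    _ = (s * (2 - s)) ^ 2 * ⟪x, N⟫ := by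
        rw [hip, hiN, hdx]
        linear_combination (4 * ((1 - s) * Real.cos t) * ((1 - s) * Real.sin t) * ⟪x, p⟫
          + 4 * ((1 - s) * Real.sin t) ^ 2 * ⟪x, N⟫ - 4 * ((1 - s) * Real.sin t)) * hab

lemma coefA {s t : ℝ} (hs : 0 ≤ s) (hs8 : s ≤ 1/8) (ht8 : |t| ≤ 1/8) :
    |2 * ((1 - s) * Real.cos t) * ((1 - s) * Real.sin t) - 2 * t|
      ≤ 2 * |t| ^ 3 + 4 * s * |t| := by
  have hsc := abs_sincos_sub_le (t := t) (by linarith)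
  obtain ⟨k1, k2⟩ := abs_le.mp hsc
  have hA0 : (0:ℝ) ≤ (1 - s) ^ 2 := sq_nonneg _
  have hsσ : (0:ℝ) ≤ s * (2 - s) := by nlinarith
  have habt := abs_nonneg t
  have f1 : (1 - s) ^ 2 * (Real.sin t * Real.cos t - t) ≤ (1 - s) ^ 2 * |t| ^ 3 :=
    mul_le_mul_of_nonneg_left k2 hA0
  have f2 : (1 - s) ^ 2 * (-(|t| ^ 3)) ≤ (1 - s) ^ 2 * (Real.sin t * Real.cos t - t) :=
    mul_le_mul_of_nonneg_left k1 hA0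
  have f3 : (1 - s) ^ 2 * |t| ^ 3 ≤ |t| ^ 3 := by
    nlinarith [pow_nonneg habt 3]
  have g1 : (0:ℝ) ≤ (|t| + t) * (s * (2 - s)) :=
    mul_nonneg (by linarith [neg_abs_le t]) hsσ
  have g2 : (0:ℝ) ≤ (|t| - t) * (s * (2 - s)) :=
    mul_nonneg (by linarith [le_abs_self t]) hsσ
  have g3 : (0:ℝ) ≤ s * s * |t| := by positivity
  rw [abs_le]
  constructor
  · linarith [f2, f3, g2, g3]
  · linarith [f1, f3, g1, g3]

lemma coefB {s t : ℝ} (hs : 0 ≤ s) (hs8 : s ≤ 1/8) (ht8 : |t| ≤ 1/8) :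
    |(s * (2 - s) + 2 * ((1 - s) * Real.sin t) ^ 2) - 2 * s| ≤ s ^ 2 + 2 * t ^ 2 := by
  have hsin2 : Real.sin t ^ 2 ≤ t ^ 2 := by
    nlinarith [Real.abs_sin_le_abs (x := t), abs_nonneg (Real.sin t), sq_abs t,
      sq_abs (Real.sin t)]
  have hA0 : (0:ℝ) ≤ (1 - s) ^ 2 := sq_nonneg _
  have f4 : (0:ℝ) ≤ (1 - (1 - s) ^ 2) * Real.sin t ^ 2 := by
    apply mul_nonneg (by nlinarith) (sq_nonneg _)
  have f5 : (0:ℝ) ≤ (1 - s) ^ 2 * Real.sin t ^ 2 := mul_nonneg hA0 (sq_nonneg _)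
  rw [abs_le]
  constructor
  · nlinarith [f5, sq_nonneg t, sq_nonneg s]
  · nlinarith [hsin2, f4, sq_nonneg s]

lemma coefC {s t : ℝ} (hs : 0 ≤ s) (hs8 : s ≤ 1/8) (ht8 : |t| ≤ 1/8) :
    |2 * ((1 - s) * Real.sin t) - 2 * t| ≤ |t| ^ 3 / 2 + 2 * s * |t| := by
  have hst := abs_sin_sub_le (x := t) (by linarith)
  obtain ⟨l1, l2⟩ := abs_le.mp hst
  have hB0 : (0:ℝ) ≤ 1 - s := by linarith
  have habt := abs_nonneg t
  have f1 : (1 - s) * (Real.sin t - t) ≤ (1 - s) * (|t| ^ 3 / 4) :=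
    mul_le_mul_of_nonneg_left l2 hB0
  have f2 : (1 - s) * (-(|t| ^ 3 / 4)) ≤ (1 - s) * (Real.sin t - t) :=
    mul_le_mul_of_nonneg_left l1 hB0
  have f3 : (1 - s) * (|t| ^ 3 / 4) ≤ |t| ^ 3 / 4 := by
    nlinarith [pow_nonneg habt 3]
  have g1 : (0:ℝ) ≤ (|t| + t) * s := mul_nonneg (by linarith [neg_abs_le t]) hs
  have g2 : (0:ℝ) ≤ (|t| - t) * s := mul_nonneg (by linarith [le_abs_self t]) hs
  rw [abs_le]
  constructor
  · linarith [f2, f3, g2]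
  · linarith [f1, f3, g1]

set_option maxHeartbeats 1000000 in
lemma Ediff_bound (p N : E4) (hp1 : ‖p‖ = 1) (hN1 : ‖N‖ = 1)
    (s t m : ℝ) (hs : 0 ≤ s) (hs8 : s ≤ 1/8) (ht8 : |t| ≤ 1/8)
    (hsm : s ≤ m) (htm : |t| ≤ m) (hm1 : m ≤ 1)
    (y : E4) (hy : ‖y‖ = 1) :
    |(2 * ((1 - s) * Real.cos t) * ((1 - s) * Real.sin t) * ⟪y, p⟫
      + (s * (2 - s) + 2 * ((1 - s) * Real.sin t) ^ 2) * ⟪y, N⟫ + 2 * ((1 - s) * Real.sin t))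
     - (2 * t * ⟪y, p⟫ + 2 * s * ⟪y, N⟫ + 2 * t)| ≤ 12 * m ^ 2 := by
  have hm0 : 0 ≤ m := le_trans hs hsm
  have hyp : |⟪y, p⟫| ≤ 1 := by
    have := abs_real_inner_le_norm y p
    rwa [hy, hp1, one_mul] at this
  have hyN : |⟪y, N⟫| ≤ 1 := by
    have := abs_real_inner_le_norm y N
    rwa [hy, hN1, one_mul] at this
  have e1 := coefA hs hs8 ht8
  have e2 := coefB hs hs8 ht8
  have e3 := coefC hs hs8 ht8
  have e0 : (2 * ((1 - s) * Real.cos t) * ((1 - s) * Real.sin t) * ⟪y, p⟫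
      + (s * (2 - s) + 2 * ((1 - s) * Real.sin t) ^ 2) * ⟪y, N⟫ + 2 * ((1 - s) * Real.sin t))
      - (2 * t * ⟪y, p⟫ + 2 * s * ⟪y, N⟫ + 2 * t)
      = (2 * ((1 - s) * Real.cos t) * ((1 - s) * Real.sin t) - 2 * t) * ⟪y, p⟫
        + ((s * (2 - s) + 2 * ((1 - s) * Real.sin t) ^ 2) - 2 * s) * ⟪y, N⟫
        + (2 * ((1 - s) * Real.sin t) - 2 * t) := by ring
  rw [e0]
  have tri := abs_add_three
    ((2 * ((1 - s) * Real.cos t) * ((1 - s) * Real.sin t) - 2 * t) * ⟪y, p⟫)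
    (((s * (2 - s) + 2 * ((1 - s) * Real.sin t) ^ 2) - 2 * s) * ⟪y, N⟫)
    (2 * ((1 - s) * Real.sin t) - 2 * t)
  rw [abs_mul, abs_mul] at tri
  have m1 : |2 * ((1 - s) * Real.cos t) * ((1 - s) * Real.sin t) - 2 * t| * |⟪y, p⟫|
      ≤ 2 * |t| ^ 3 + 4 * s * |t| := by
    have := mul_le_mul_of_nonneg_left hyp
      (abs_nonneg (2 * ((1 - s) * Real.cos t) * ((1 - s) * Real.sin t) - 2 * t))
    rw [mul_one] at this
    exact le_trans this e1
  have m2 : |(s * (2 - s) + 2 * ((1 - s) * Real.sin t) ^ 2) - 2 * s| * |⟪y, N⟫|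
      ≤ s ^ 2 + 2 * t ^ 2 := by
    have := mul_le_mul_of_nonneg_left hyN
      (abs_nonneg ((s * (2 - s) + 2 * ((1 - s) * Real.sin t) ^ 2) - 2 * s))
    rw [mul_one] at this
    exact le_trans this e2
  have habt := abs_nonneg t
  have p3 : |t| ^ 3 ≤ m ^ 2 := by
    have q1 : |t| ^ 3 ≤ m ^ 3 := pow_le_pow_left₀ habt htm 3
    nlinarith [q1, sq_nonneg m]
  have pst : s * |t| ≤ m ^ 2 := by nlinarith
  have ps2 : s ^ 2 ≤ m ^ 2 := by nlinarith
  have pt2 : t ^ 2 ≤ m ^ 2 := by nlinarith [sq_abs t]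
  linarith [tri, m1, m2, e3, sq_nonneg m]

set_option maxHeartbeats 2000000 in
/-- Proposition B.1 of Marques–Neves.  There are a constant `C₀ > 0` and, for each
`r ∈ (0, π/4)`, constants `C₁ = C₁(r) > 0`, `ε₀ = ε₀(r) > 0` such that for all
`v = (1-s)(cos t · p + sin t · N)` with `p, N ∈ S³`, `⟪p,N⟫ = 0`, `0 < s ≤ ε₀`,
`|t| ≤ ε₀`:

`B⁴_{R̄-C₀√|(s,t)|}(Q̄) ∩ S³ ⊆ F_v(B⁴_{√2}(-N) ∩ S³) ⊆ B⁴_{R̄+C₀√|(s,t)|}(Q̄) ∩ S³`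

and `F_v(Δ(p,N,r) ∩ S³) ⊆ B⁴_{R̄+C₁√|(s,t)|}(Q̄) \ B⁴_{R̄-C₁√|(s,t)|}(Q̄)`,

where `|(s,t)| = √(s² + t²)`. -/
theorem confMap_cap_estimates :
    ∃ C₀ > (0:ℝ), ∀ r ∈ Set.Ioo (0:ℝ) (Real.pi / 4), ∃ C₁ > (0:ℝ), ∃ ε₀ > (0:ℝ),
      ∀ p N : E4, p ∈ S3 → N ∈ S3 → ⟪p, N⟫ = 0 →
      ∀ s t : ℝ, 0 < s → s ≤ ε₀ → |t| ≤ ε₀ →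
        (Metric.ball (Qbar p N s t) (Rbar s t - C₀ * Real.sqrt (Real.sqrt (s ^ 2 + t ^ 2)))
            ∩ S3 ⊆
          confMap ((1 - s) • (Real.cos t • p + Real.sin t • N)) ''
            (Metric.ball (-N) (Real.sqrt 2) ∩ S3)) ∧
        (confMap ((1 - s) • (Real.cos t • p + Real.sin t • N)) ''
            (Metric.ball (-N) (Real.sqrt 2) ∩ S3) ⊆
          Metric.ball (Qbar p N s t) (Rbar s t + C₀ * Real.sqrt (Real.sqrt (s ^ 2 + t ^ 2)))
            ∩ S3) ∧
        (confMap ((1 - s) • (Real.cos t • p + Real.sin t • N)) '' (capDelta p N r ∩ S3) ⊆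
          Metric.ball (Qbar p N s t) (Rbar s t + C₁ * Real.sqrt (Real.sqrt (s ^ 2 + t ^ 2))) \
            Metric.ball (Qbar p N s t)
              (Rbar s t - C₁ * Real.sqrt (Real.sqrt (s ^ 2 + t ^ 2)))) := by
  refine ⟨4, by norm_num, ?_⟩
  rintro r ⟨hr0, hr4⟩
  have hpi3 : (3:ℝ) < Real.pi := Real.pi_gt_three
  have hpi4 : Real.pi < 3.15 := by
    have := Real.pi_lt_d2
    linarith
  have hr1 : r < 1 := by linarith
  have hsr0 : 0 < Real.sqrt r := Real.sqrt_pos.mpr hr0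
  have hsr2 : Real.sqrt r * Real.sqrt r = r := Real.mul_self_sqrt hr0.le
  refine ⟨5 / Real.sqrt r, by positivity, r / 8, by positivity, ?_⟩
  intro p N hpS hNS hpN s t hs hse hte
  set c : ℝ := 5 / Real.sqrt r with hc_def
  have hc0 : 0 < c := by rw [hc_def]; positivity
  have hcsq : c ^ 2 * r = 25 := by
    rw [hc_def, div_pow, Real.sq_sqrt hr0.le]
    field_simp
    norm_num
  -- basic norms
  have hp1 : ‖p‖ = 1 := by simpa [S3, mem_sphere_zero_iff_norm] using hpS
  have hN1 : ‖N‖ = 1 := by simpa [S3, mem_sphere_zero_iff_norm] using hNS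
  have hpp : ⟪p, p⟫ = 1 := by rw [real_inner_self_eq_norm_sq, hp1]; norm_num
  have hNN : ⟪N, N⟫ = 1 := by rw [real_inner_self_eq_norm_sq, hN1]; norm_num
  have hNp : ⟪N, p⟫ = 0 := by rw [real_inner_comm]; exact hpN
  have hs8 : s ≤ 1/8 := by linarith
  have ht8 : |t| ≤ 1/8 := by linarith
  obtain ⟨ht1, ht2⟩ := abs_le.mp ht8
  have hs1 : s < 1 := by linarith
  -- m and δ
  set m := Real.sqrt (s ^ 2 + t ^ 2) with hm_def
  set δ := Real.sqrt m with hδ_def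
  have hm0 : 0 < m := Real.sqrt_pos.mpr (by positivity)
  have hmsq : m ^ 2 = s ^ 2 + t ^ 2 := Real.sq_sqrt (by positivity)
  have hδ0 : 0 < δ := Real.sqrt_pos.mpr hm0
  have hδsq : δ ^ 2 = m := Real.sq_sqrt hm0.le
  have hsm : s ≤ m := by nlinarith only [hmsq, hm0, hs, sq_nonneg t]
  have htm : |t| ≤ m := by
    nlinarith only [hmsq, hm0, abs_nonneg t, sq_abs t, sq_nonneg s]
  have hm1 : m ≤ 1 := by
    have h1 : s ^ 2 + t ^ 2 ≤ 1 := by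
      nlinarith only [hs8, ht8, hs, sq_abs t, abs_nonneg t]
    rw [hm_def]
    exact Real.sqrt_le_one.mpr h1
  obtain ⟨htm1, htm2⟩ := abs_le.mp htm
  -- v
  set v : E4 := (1 - s) • (Real.cos t • p + Real.sin t • N) with hv_def
  have hvp : ⟪v, p⟫ = (1 - s) * Real.cos t := by
    rw [hv_def, real_inner_smul_left, inner_add_left, real_inner_smul_left,
      real_inner_smul_left, hpp, hNp]; ring
  have hvN : ⟪v, N⟫ = (1 - s) * Real.sin t := by
    rw [hv_def, real_inner_smul_left, inner_add_left, real_inner_smul_left,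
      real_inner_smul_left, hpN, hNN]; ring
  have hvsq : ‖v‖ ^ 2 = (1 - s) ^ 2 := by
    rw [← real_inner_self_eq_norm_sq]
    rw [hv_def, real_inner_smul_right, inner_add_right, real_inner_smul_right,
      real_inner_smul_right, ← hv_def, hvp, hvN]
    linear_combination (1 - s) ^ 2 * Real.sin_sq_add_cos_sq t
  have hvv : ‖v‖ = 1 - s := eq_of_sq_eq_sq' (norm_nonneg v) (by linarith) (by rw [hvsq])
  have hv1 : ‖v‖ < 1 := by rw [hvv]; linarith
  have hdxf : ∀ x : E4, ‖x‖ = 1 → ‖x - v‖ ^ 2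
      = 2 - s * (2 - s) - 2 * (1 - s) * (Real.cos t * ⟪x, p⟫ + Real.sin t * ⟪x, N⟫) := by
    intro x hx
    have hxv : ⟪x, v⟫ = (1 - s) * (Real.cos t * ⟪x, p⟫ + Real.sin t * ⟪x, N⟫) := by
      rw [hv_def, real_inner_smul_right, inner_add_right, real_inner_smul_right,
        real_inner_smul_right]
    rw [norm_sub_sq_real, hx, hxv, hvsq]; ring
  have hkeyf : ∀ x : E4, ‖x‖ = 1 →
      (2 * ((1 - s) * Real.cos t) * ((1 - s) * Real.sin t) * ⟪confMap v x, p⟫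
        + (s * (2 - s) + 2 * ((1 - s) * Real.sin t) ^ 2) * ⟪confMap v x, N⟫
        + 2 * ((1 - s) * Real.sin t)) * ‖x - v‖ ^ 2
      = (s * (2 - s)) ^ 2 * ⟪x, N⟫ :=
    fun x hx => key_id p N hp1 hN1 hpN s t hs hs1 x hx
  -- Qbar, Rbar facts
  have hsq1 : Real.sqrt (1 + (t / s) ^ 2) = m / s := by
    apply eq_of_sq_eq_sq' (Real.sqrt_nonneg _) (by positivity)
    rw [Real.sq_sqrt (by positivity), div_pow, div_pow, hmsq]
    field_simp
  have hts_m : t / s / (m / s) = t / m := by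
    rw [div_div_div_cancel_right₀ hs.ne' t m]
  have hQ : Qbar p N s t = (-(t / m)) • p - (s / m) • N := by
    rw [Qbar, hsq1, hts_m, one_div, inv_div]
  have hyQ : ∀ y : E4, ⟪y, Qbar p N s t⟫ = -(t / m) * ⟪y, p⟫ - s / m * ⟪y, N⟫ := by
    intro y
    rw [hQ, inner_sub_right, real_inner_smul_right, real_inner_smul_right]
  have hQp : ⟪Qbar p N s t, p⟫ = -(t / m) := by
    rw [hQ, inner_sub_left, real_inner_smul_left, real_inner_smul_left, hpp, hNp]; ring
  have hQN : ⟪Qbar p N s t, N⟫ = -(s / m) := by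
    rw [hQ, inner_sub_left, real_inner_smul_left, real_inner_smul_left, hpN, hNN]; ring
  have hQQ : ‖Qbar p N s t‖ ^ 2 = 1 := by
    rw [← real_inner_self_eq_norm_sq, hyQ _, hQp, hQN]
    field_simp
    linear_combination (-1 : ℝ) * hmsq
  have hnormyQ : ∀ y : E4, ‖y‖ = 1 → ‖y - Qbar p N s t‖ ^ 2 = 2 - 2 * ⟪y, Qbar p N s t⟫ := by
    intro y hy
    rw [norm_sub_sq_real, hy, hQQ]; ring
  have hRsq : (Rbar s t) ^ 2 = 2 - 2 * (t / m) := by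
    rw [Rbar, hsq1, hts_m, Real.sq_sqrt]
    · ring
    · have : t / m ≤ 1 := by
        rw [div_le_one hm0]; exact htm2
      linarith
  have hR0 : 0 ≤ Rbar s t := Real.sqrt_nonneg _
  have hyQm : ∀ y : E4, (2 - 2 * ⟪y, Qbar p N s t⟫) * m
      = 2 * m + 2 * t * ⟪y, p⟫ + 2 * s * ⟪y, N⟫ := by
    intro y
    rw [hyQ]
    field_simp
    ring
  have hRm : (Rbar s t) ^ 2 * m = 2 * m - 2 * t := by
    rw [hRsq]
    field_simp
  have hσ0 : 0 < s * (2 - s) := mul_pos hs (by linarith)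
  have hS3 : ∀ x : E4, ‖x‖ = 1 → confMap v x ∈ S3 := by
    intro x hx
    have := confMap_norm hx hv1
    simpa [S3, mem_sphere_zero_iff_norm] using this
  refine ⟨?_, ?_, ?_⟩
  · -- Part 1 : small ball ⊆ image
    rintro y ⟨hyb, hyS⟩
    have hy1 : ‖y‖ = 1 := by simpa [S3, mem_sphere_zero_iff_norm] using hyS
    rw [mem_ball, dist_eq_norm] at hyb
    have h4δ : 4 * δ < Rbar s t := by
      have := norm_nonneg (y - Qbar p N s t)
      linarith
    have hsq' : 2 - 2 * ⟪y, Qbar p N s t⟫ < (Rbar s t - 4 * δ) ^ 2 := by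
      have h := pow_lt_pow_left₀ hyb (norm_nonneg _) two_ne_zero
      rwa [hnormyQ y hy1] at h
    have h2 : (2 - 2 * ⟪y, Qbar p N s t⟫) * m < (Rbar s t - 4 * δ) ^ 2 * m :=
      mul_lt_mul_of_pos_right hsq' hm0
    rw [show (Rbar s t - 4 * δ) ^ 2 * m
        = (Rbar s t) ^ 2 * m - 8 * Rbar s t * δ * m + 16 * (δ ^ 2 * m) from by ring,
      hRm, hδsq, hyQm] at h2
    obtain ⟨hEb1, hEb2⟩ := abs_le.mp
      (Ediff_bound p N hp1 hN1 s t m hs.le hs8 ht8 hsm htm hm1 y hy1)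
    have hδδm : δ * δ * m = m * m := by
      have : δ * δ = m := by rw [← hδsq]; ring
      rw [this]
    have hintp : 0 < (Rbar s t - 4 * δ) * (δ * m) :=
      mul_pos (sub_pos.mpr h4δ) (mul_pos hδ0 hm0)
    have hEneg : 2 * ((1 - s) * Real.cos t) * ((1 - s) * Real.sin t) * ⟪y, p⟫
        + (s * (2 - s) + 2 * ((1 - s) * Real.sin t) ^ 2) * ⟪y, N⟫
        + 2 * ((1 - s) * Real.sin t) < 0 := by
      nlinarith only [hintp, hδδm, h2, hEb2, mul_pos hm0 hm0]
    set x : E4 := confMap (-v) y with hx_def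
    have hvneg : ‖-v‖ < 1 := by rwa [norm_neg]
    have hx1 : ‖x‖ = 1 := confMap_norm hy1 hvneg
    have hfix : confMap v x = y := by
      have h := confMap_inv hy1 hvneg
      rwa [neg_neg] at h
    have hk := hkeyf x hx1
    rw [hfix] at hk
    have hdp := dist_sq_pos hx1 hv1
    have hxN : ⟪x, N⟫ < 0 := by
      have hlt : (s * (2 - s)) ^ 2 * ⟪x, N⟫ < 0 := by
        rw [← hk]; exact mul_neg_of_neg_of_pos hEneg hdp
      nlinarith only [hlt, pow_pos hσ0 2]
    refine ⟨x, ⟨?_, ?_⟩, hfix⟩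
    · rw [mem_ball, dist_eq_norm, sub_neg_eq_add]
      apply lt_of_pow_lt_pow_left₀ 2 (Real.sqrt_nonneg 2)
      rw [Real.sq_sqrt (by norm_num : (0:ℝ) ≤ 2), norm_add_sq_real, hx1, hN1]
      nlinarith only [hxN]
    · simpa [S3, mem_sphere_zero_iff_norm] using hx1
  · -- Part 2 : image ⊆ big ball
    rintro y ⟨x, ⟨hxb, hxS⟩, rfl⟩
    have hx1 : ‖x‖ = 1 := by simpa [S3, mem_sphere_zero_iff_norm] using hxS
    have hxN : ⟪x, N⟫ < 0 := by
      rw [mem_ball, dist_eq_norm, sub_neg_eq_add] at hxb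
      have h2 : ‖x + N‖ ^ 2 < 2 := by
        have h := pow_lt_pow_left₀ hxb (norm_nonneg _) two_ne_zero
        rwa [Real.sq_sqrt (by norm_num : (0:ℝ) ≤ 2)] at h
      rw [norm_add_sq_real, hx1, hN1] at h2
      linarith
    have hy1 : ‖confMap v x‖ = 1 := confMap_norm hx1 hv1
    have hdp := dist_sq_pos hx1 hv1
    have hk := hkeyf x hx1
    have hE : 2 * ((1 - s) * Real.cos t) * ((1 - s) * Real.sin t) * ⟪confMap v x, p⟫
        + (s * (2 - s) + 2 * ((1 - s) * Real.sin t) ^ 2) * ⟪confMap v x, N⟫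
        + 2 * ((1 - s) * Real.sin t) < 0 := by
      nlinarith only [hk, hdp, mul_neg_of_pos_of_neg (pow_pos hσ0 2) hxN]
    obtain ⟨hEb1, hEb2⟩ := abs_le.mp
      (Ediff_bound p N hp1 hN1 s t m hs.le hs8 ht8 hsm htm hm1 (confMap v x) hy1)
    refine ⟨?_, hS3 x hx1⟩
    rw [mem_ball, dist_eq_norm]
    apply lt_of_pow_lt_pow_left₀ 2 (by positivity)
    rw [hnormyQ _ hy1]
    have hstep : (2 - 2 * ⟪confMap v x, Qbar p N s t⟫) * m
        < (Rbar s t + 4 * δ) ^ 2 * m := by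
      rw [show (Rbar s t + 4 * δ) ^ 2 * m
          = (Rbar s t) ^ 2 * m + 8 * Rbar s t * δ * m + 16 * (δ ^ 2 * m) from by ring,
        hRm, hδsq, hyQm]
      nlinarith only [hE, hEb1, mul_pos hm0 hm0,
        mul_nonneg (mul_nonneg hR0 hδ0.le) hm0.le]
    exact lt_of_mul_lt_mul_right hstep hm0.le
  · -- Part 3 : capDelta maps into annulus
    rintro y ⟨x, ⟨hxΔ, hxS⟩, rfl⟩
    obtain ⟨hxS3, hnot⟩ := hxΔ
    have hx1 : ‖x‖ = 1 := by simpa [S3, mem_sphere_zero_iff_norm] using hxS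
    have hnotp : x ∉ Metric.ball (Real.cos r • p + Real.sin r • N)
        (Real.sqrt (2 * (1 - Real.cos r))) := fun h => hnot (Or.inl h)
    have hnotm : x ∉ Metric.ball (Real.cos r • p - Real.sin r • N)
        (Real.sqrt (2 * (1 - Real.cos r))) := fun h => hnot (Or.inr h)
    have hcosr1 : Real.cos r ≤ 1 := Real.cos_le_one r
    have hcos_nn : (0:ℝ) ≤ 2 * (1 - Real.cos r) := by linarith
    have hqp1 : ‖Real.cos r • p + Real.sin r • N‖ ^ 2 = 1 := by
      rw [norm_add_sq_real, norm_smul, norm_smul, real_inner_smul_left,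
        real_inner_smul_right, hpN, hp1, hN1, Real.norm_eq_abs, Real.norm_eq_abs,
        mul_one, mul_one, sq_abs, sq_abs]
      linear_combination Real.sin_sq_add_cos_sq r
    have hqm1 : ‖Real.cos r • p - Real.sin r • N‖ ^ 2 = 1 := by
      rw [norm_sub_sq_real, norm_smul, norm_smul, real_inner_smul_left,
        real_inner_smul_right, hpN, hp1, hN1, Real.norm_eq_abs, Real.norm_eq_abs,
        mul_one, mul_one, sq_abs, sq_abs]
      linear_combination Real.sin_sq_add_cos_sq r
    have hc1 : Real.cos r * ⟪x, p⟫ + Real.sin r * ⟪x, N⟫ ≤ Real.cos r := by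
      have h1 : Real.sqrt (2 * (1 - Real.cos r))
          ≤ ‖x - (Real.cos r • p + Real.sin r • N)‖ := by
        have := not_lt.mp (fun h => hnotp (by rwa [mem_ball, dist_eq_norm]))
        exact this
      have h2 : 2 * (1 - Real.cos r) ≤ ‖x - (Real.cos r • p + Real.sin r • N)‖ ^ 2 := by
        have h := pow_le_pow_left₀ (Real.sqrt_nonneg _) h1 2
        rwa [Real.sq_sqrt hcos_nn] at h
      rw [norm_sub_sq_real, hx1, hqp1, inner_add_right, real_inner_smul_right,
        real_inner_smul_right] at h2
      linarith
    have hc2 : Real.cos r * ⟪x, p⟫ - Real.sin r * ⟪x, N⟫ ≤ Real.cos r := by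
      have h1 : Real.sqrt (2 * (1 - Real.cos r))
          ≤ ‖x - (Real.cos r • p - Real.sin r • N)‖ := by
        have := not_lt.mp (fun h => hnotm (by rwa [mem_ball, dist_eq_norm]))
        exact this
      have h2 : 2 * (1 - Real.cos r) ≤ ‖x - (Real.cos r • p - Real.sin r • N)‖ ^ 2 := by
        have h := pow_le_pow_left₀ (Real.sqrt_nonneg _) h1 2
        rwa [Real.sq_sqrt hcos_nn] at h
      rw [norm_sub_sq_real, hx1, hqm1, inner_sub_right, real_inner_smul_right,
        real_inner_smul_right] at h2
      linarith
    have habs : Real.cos r * ⟪x, p⟫ + Real.sin r * |⟪x, N⟫| ≤ Real.cos r := by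
      rcases abs_cases ⟪x, N⟫ with ⟨h, _⟩ | ⟨h, _⟩
      · rw [h]; exact hc1
      · rw [h]; linarith [hc2]
    have hcosr0 : 0 < Real.cos r := by
      apply Real.cos_pos_of_mem_Ioo
      constructor <;> [linarith; linarith]
    have hsinr0 : 0 < Real.sin r := Real.sin_pos_of_pos_of_lt_pi hr0 (by linarith)
    have hsinr1 : Real.sin r ≤ 1 := Real.sin_le_one r
    have hr3 : r ^ 3 ≤ r := by
      have h := mul_nonneg (mul_nonneg hr0.le (by linarith : (0:ℝ) ≤ 1 - r))
        (by linarith : (0:ℝ) ≤ 1 + r)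
      nlinarith only [h]
    have hsinrlb : 3 * r / 4 ≤ Real.sin r := by
      linarith only [Real.sin_gt_sub_cube hr0, hr3, hr0]
    have hxN1 : |⟪x, N⟫| ≤ 1 := by
      have := abs_real_inner_le_norm x N
      rwa [hx1, hN1, one_mul] at this
    have hαb : ⟪x, p⟫ ≤ 1 - Real.sin r * |⟪x, N⟫| := by
      nlinarith only [habs, hcosr0,
        mul_nonneg (mul_nonneg hsinr0.le (abs_nonneg ⟪x, N⟫))
          (by linarith : (0:ℝ) ≤ 1 - Real.cos r)]
    have hcost0 : 0 < Real.cos t := by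
      apply Real.cos_pos_of_mem_Ioo
      constructor
      · linarith
      · linarith
    have hcost1 : Real.cos t ≤ 1 := Real.cos_le_one t
    have hcomb : Real.cos t * ⟪x, p⟫ + Real.sin t * ⟪x, N⟫ ≤ 1 - r / 2 * |⟪x, N⟫| := by
      have hb1 : (0:ℝ) ≤ 1 - Real.sin r * |⟪x, N⟫| := by
        have h := mul_nonneg (by linarith : (0:ℝ) ≤ 1 - Real.sin r) (abs_nonneg ⟪x, N⟫)
        nlinarith only [h, hxN1, hsinr0]
      have h2 : Real.cos t * ⟪x, p⟫ ≤ 1 - Real.sin r * |⟪x, N⟫| := by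
        calc Real.cos t * ⟪x, p⟫ ≤ Real.cos t * (1 - Real.sin r * |⟪x, N⟫|) :=
              mul_le_mul_of_nonneg_left hαb hcost0.le
          _ ≤ 1 - Real.sin r * |⟪x, N⟫| := mul_le_of_le_one_left hb1 hcost1
      have h3 : Real.sin t * ⟪x, N⟫ ≤ |t| * |⟪x, N⟫| := by
        calc Real.sin t * ⟪x, N⟫ ≤ |Real.sin t * ⟪x, N⟫| := le_abs_self _
          _ = |Real.sin t| * |⟪x, N⟫| := abs_mul _ _
          _ ≤ |t| * |⟪x, N⟫| :=
              mul_le_mul_of_nonneg_right (Real.abs_sin_le_abs) (abs_nonneg _)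
      have hg := mul_nonneg
        (show (0:ℝ) ≤ Real.sin r - |t| - r / 2 by linarith) (abs_nonneg ⟪x, N⟫)
      nlinarith only [hg, h2, h3]
    have hdlb : s ^ 2 + r / 2 * |⟪x, N⟫| ≤ ‖x - v‖ ^ 2 := by
      rw [hdxf x hx1]
      nlinarith only [mul_le_mul_of_nonneg_left hcomb (show (0:ℝ) ≤ 2 * (1 - s) by linarith),
        mul_nonneg (mul_nonneg hr0.le (abs_nonneg ⟪x, N⟫))
          (show (0:ℝ) ≤ 1 - 2 * s by linarith)]
    have hy1 : ‖confMap v x‖ = 1 := confMap_norm hx1 hv1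
    have hdp := dist_sq_pos hx1 hv1
    have hk := hkeyf x hx1
    have habsk : |2 * ((1 - s) * Real.cos t) * ((1 - s) * Real.sin t) * ⟪confMap v x, p⟫
        + (s * (2 - s) + 2 * ((1 - s) * Real.sin t) ^ 2) * ⟪confMap v x, N⟫
        + 2 * ((1 - s) * Real.sin t)| * ‖x - v‖ ^ 2 = (s * (2 - s)) ^ 2 * |⟪x, N⟫| := by
      have h := congrArg abs hk
      rwa [abs_mul, abs_mul, abs_of_nonneg (sq_nonneg (s * (2 - s))),
        abs_of_nonneg (by positivity : (0:ℝ) ≤ ‖x - v‖ ^ 2)] at h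
    have hE8 : |2 * ((1 - s) * Real.cos t) * ((1 - s) * Real.sin t) * ⟪confMap v x, p⟫
        + (s * (2 - s) + 2 * ((1 - s) * Real.sin t) ^ 2) * ⟪confMap v x, N⟫
        + 2 * ((1 - s) * Real.sin t)| * r ≤ 8 * s ^ 2 := by
      set E := 2 * ((1 - s) * Real.cos t) * ((1 - s) * Real.sin t) * ⟪confMap v x, p⟫
        + (s * (2 - s) + 2 * ((1 - s) * Real.sin t) ^ 2) * ⟪confMap v x, N⟫
        + 2 * ((1 - s) * Real.sin t) with hE_def
      have h1 : |E| * (s ^ 2 + r / 2 * |⟪x, N⟫|) ≤ 4 * s ^ 2 * |⟪x, N⟫| := by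
        calc |E| * (s ^ 2 + r / 2 * |⟪x, N⟫|) ≤ |E| * ‖x - v‖ ^ 2 :=
              mul_le_mul_of_nonneg_left hdlb (abs_nonneg _)
          _ = (s * (2 - s)) ^ 2 * |⟪x, N⟫| := habsk
          _ ≤ 4 * s ^ 2 * |⟪x, N⟫| := by
              nlinarith only [mul_nonneg (mul_nonneg (mul_nonneg hs.le hs.le) hs.le)
                  (mul_nonneg (show (0:ℝ) ≤ 4 - s by linarith) (abs_nonneg ⟪x, N⟫))]
      rcases eq_or_lt_of_le (abs_nonneg ⟪x, N⟫) with hb0 | hb0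
      · rw [← hb0] at h1
        simp only [mul_zero, add_zero] at h1
        have hE0 : |E| ≤ 0 := by
          have h2 : |E| * s ^ 2 ≤ 0 * s ^ 2 := by rw [zero_mul]; exact h1
          exact le_of_mul_le_mul_right h2 (by positivity)
        have hE0' : |E| = 0 := le_antisymm hE0 (abs_nonneg E)
        rw [hE0', zero_mul]
        positivity
      · nlinarith only [h1, mul_nonneg (abs_nonneg E) (sq_nonneg s), hb0]
    obtain ⟨hEb1, hEb2⟩ := abs_le.mp
      (Ediff_bound p N hp1 hN1 s t m hs.le hs8 ht8 hsm htm hm1 (confMap v x) hy1)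
    have hEbar_abs : |2 * t * ⟪confMap v x, p⟫ + 2 * s * ⟪confMap v x, N⟫ + 2 * t| * r
        ≤ 20 * m ^ 2 := by
      set E := 2 * ((1 - s) * Real.cos t) * ((1 - s) * Real.sin t) * ⟪confMap v x, p⟫
        + (s * (2 - s) + 2 * ((1 - s) * Real.sin t) ^ 2) * ⟪confMap v x, N⟫
        + 2 * ((1 - s) * Real.sin t) with hE_def
      set Eb := 2 * t * ⟪confMap v x, p⟫ + 2 * s * ⟪confMap v x, N⟫ + 2 * t with hEb_def
      have h1 : |Eb| ≤ |E| + 12 * m ^ 2 := by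
        have e : Eb = E - (E - Eb) := by ring
        rw [e]
        calc |E - (E - Eb)| ≤ |E| + |E - Eb| := abs_sub _ _
          _ ≤ |E| + 12 * m ^ 2 := by
              have : |E - Eb| ≤ 12 * m ^ 2 := abs_le.mpr ⟨hEb1, hEb2⟩
              linarith
      calc |Eb| * r ≤ (|E| + 12 * m ^ 2) * r := mul_le_mul_of_nonneg_right h1 hr0.le
        _ = |E| * r + 12 * m ^ 2 * r := by ring
        _ ≤ 8 * s ^ 2 + 12 * m ^ 2 := by
            have h := mul_nonneg (sq_nonneg m) (show (0:ℝ) ≤ 1 - r by linarith)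
            nlinarith only [hE8, h]
        _ ≤ 20 * m ^ 2 := by
            have h := mul_self_le_mul_self hs.le hsm
            nlinarith only [h]
    constructor
    · -- in the big ball
      rw [mem_ball, dist_eq_norm]
      apply lt_of_pow_lt_pow_left₀ 2 (by positivity)
      rw [hnormyQ _ hy1]
      have hstep : (2 - 2 * ⟪confMap v x, Qbar p N s t⟫) * (m * r)
          < (Rbar s t + c * δ) ^ 2 * (m * r) := by
        rw [show (2 - 2 * ⟪confMap v x, Qbar p N s t⟫) * (m * r)
            = ((2 - 2 * ⟪confMap v x, Qbar p N s t⟫) * m) * r from by ring,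
          show (Rbar s t + c * δ) ^ 2 * (m * r)
            = ((Rbar s t) ^ 2 * m) * r + 2 * Rbar s t * c * δ * m * r
              + (c ^ 2 * r) * (δ ^ 2 * m) from by ring,
          hRm, hcsq, hδsq, hyQm]
        have hEr : (2 * t * ⟪confMap v x, p⟫ + 2 * s * ⟪confMap v x, N⟫ + 2 * t) * r
            ≤ 20 * m ^ 2 := by
          calc (2 * t * ⟪confMap v x, p⟫ + 2 * s * ⟪confMap v x, N⟫ + 2 * t) * r
              ≤ |2 * t * ⟪confMap v x, p⟫ + 2 * s * ⟪confMap v x, N⟫ + 2 * t| * r :=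
                mul_le_mul_of_nonneg_right (le_abs_self _) hr0.le
            _ ≤ 20 * m ^ 2 := hEbar_abs
        nlinarith only [hEr, mul_pos hm0 hm0,
          mul_nonneg (mul_nonneg (mul_nonneg (mul_nonneg (mul_nonneg
            (by norm_num : (0:ℝ) ≤ 2) hR0) hc0.le) hδ0.le) hm0.le) hr0.le]
      exact lt_of_mul_lt_mul_right hstep (by positivity)
    · -- not in the small ball
      intro hmem
      rw [mem_ball, dist_eq_norm] at hmem
      have hcδ : c * δ < Rbar s t := by
        have := norm_nonneg (confMap v x - Qbar p N s t)
        linarith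
      have hsq' : 2 - 2 * ⟪confMap v x, Qbar p N s t⟫ < (Rbar s t - c * δ) ^ 2 := by
        have h := pow_lt_pow_left₀ hmem (norm_nonneg _) two_ne_zero
        rwa [hnormyQ _ hy1] at h
      have h2 : (2 - 2 * ⟪confMap v x, Qbar p N s t⟫) * (m * r)
          < (Rbar s t - c * δ) ^ 2 * (m * r) :=
        mul_lt_mul_of_pos_right hsq' (by positivity)
      rw [show (2 - 2 * ⟪confMap v x, Qbar p N s t⟫) * (m * r)
          = ((2 - 2 * ⟪confMap v x, Qbar p N s t⟫) * m) * r from by ring,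
        show (Rbar s t - c * δ) ^ 2 * (m * r)
          = ((Rbar s t) ^ 2 * m) * r - 2 * Rbar s t * c * δ * m * r
            + (c ^ 2 * r) * (δ ^ 2 * m) from by ring,
        hRm, hcsq, hδsq, hyQm] at h2
      have hElow : -(20 * m ^ 2)
          ≤ (2 * t * ⟪confMap v x, p⟫ + 2 * s * ⟪confMap v x, N⟫ + 2 * t) * r := by
        calc -(20 * m ^ 2)
            ≤ -(|2 * t * ⟪confMap v x, p⟫ + 2 * s * ⟪confMap v x, N⟫ + 2 * t| * r) := by
              linarith [hEbar_abs]
          _ ≤ (2 * t * ⟪confMap v x, p⟫ + 2 * s * ⟪confMap v x, N⟫ + 2 * t) * r := by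
              have h := mul_le_mul_of_nonneg_right
                (neg_abs_le (2 * t * ⟪confMap v x, p⟫ + 2 * s * ⟪confMap v x, N⟫ + 2 * t))
                hr0.le
              nlinarith only [h]
      have h50 : 2 * (c * δ) * (c * δ) * (m * r) = 50 * (m * m) := by
        calc 2 * (c * δ) * (c * δ) * (m * r) = 2 * (c ^ 2 * r) * (δ ^ 2 * m) := by ring
          _ = 2 * 25 * (m * m) := by rw [hcsq, hδsq]
          _ = 50 * (m * m) := by ring
      nlinarith only [h2, hElow, h50, mul_pos hm0 hm0,
        mul_pos (sub_pos.mpr hcδ) (by positivity : (0:ℝ) < c * δ * m * r)]
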